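/- For 0 < a < b, the integral of ln(x)/sqrt((b-x)(x-a)) over [a,b] equals 2π·ln((√a+√b)/2). -/

import Mathlib

open Real intervalIntegral

noncomputable def Jint (r : ℝ) : ℝ := ∫ θ in (0:ℝ)..π, Real.log (1 + 2*r*Real.cos θ + r^2)

lemma Jpos {r : ℝ} (h0 : 0 ≤ r) (h1 : r < 1) (θ : ℝ) :
    0 < 1 + 2*r*Real.cos θ + r^2 := by
  nlinarith [Real.neg_one_le_cos θ, Real.cos_le_one θ, sq_nonneg (1 - r)]

lemma Jcont {r : ℝ} (h0 : 0 ≤ r) (h1 : r < 1) :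
    Continuous (fun θ => Real.log (1 + 2*r*Real.cos θ + r^2)) := by
  apply Continuous.log
  · continuity
  · intro θ; exact (Jpos h0 h1 θ).ne'

lemma Jneg {r : ℝ} (h0 : 0 ≤ r) (h1 : r < 1) :
    (∫ θ in (0:ℝ)..π, Real.log (1 - 2*r*Real.cos θ + r^2)) = Jint r := by
  have := intervalIntegral.integral_comp_sub_left
    (fun θ => Real.log (1 + 2*r*Real.cos θ + r^2)) π (a := 0) (b := π)
  simp only [sub_self, sub_zero] at this
  rw [Jint, ← this]
  congr 1; funext θ
  rw [Real.cos_pi_sub]; ring_nf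

lemma Jsq {r : ℝ} (h0 : 0 ≤ r) (h1 : r < 1) : Jint r = Jint (r^2) / 2 := by
  have h0' : (0:ℝ) ≤ r^2 := sq_nonneg r
  have h1' : r^2 < 1 := by nlinarith
  have c1 := Jcont h0 h1
  have c2 : Continuous (fun θ => Real.log (1 - 2*r*Real.cos θ + r^2)) := by
    apply Continuous.log
    · continuity
    · intro θ; have := Jpos h0 h1 (π - θ); rw [Real.cos_pi_sub] at this
      intro h; rw [← h] at this; nlinarith
  have key : Jint r + Jint r
      = ∫ θ in (0:ℝ)..π, Real.log (1 - 2*r^2*Real.cos (2*θ) + (r^2)^2) := by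
    nth_rewrite 2 [← Jneg h0 h1]
    rw [Jint, ← intervalIntegral.integral_add (c1.intervalIntegrable 0 π)
      (c2.intervalIntegrable 0 π)]
    congr 1; funext θ
    rw [← Real.log_mul (Jpos h0 h1 θ).ne' (by
      have := Jpos h0 h1 (π - θ); rw [Real.cos_pi_sub] at this
      intro h; rw [← h] at this; nlinarith)]
    congr 1
    have hc := Real.cos_two_mul θ
    nlinarith [Real.sin_sq_add_cos_sq θ]
  have hsub : (∫ θ in (0:ℝ)..π, Real.log (1 - 2*r^2*Real.cos (2*θ) + (r^2)^2))
      = (1/2) * ∫ u in (0:ℝ)..(2*π), Real.log (1 - 2*r^2*Real.cos u + (r^2)^2) := by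
    have := intervalIntegral.integral_comp_mul_left
      (fun u => Real.log (1 - 2*r^2*Real.cos u + (r^2)^2)) (a := 0) (b := π)
      (c := 2) two_ne_zero
    simp only [mul_zero] at this
    rw [this]; norm_num
  have hsplit : (∫ u in (0:ℝ)..(2*π), Real.log (1 - 2*r^2*Real.cos u + (r^2)^2))
      = Jint (r^2) + Jint (r^2) := by
    rw [← intervalIntegral.integral_add_adjacent_intervals (a := 0) (b := π) (c := 2*π)
      (by apply Continuous.intervalIntegrable; apply Continuous.log; · continuity
          · intro θ; have := Jpos h0' h1' (π - θ); rw [Real.cos_pi_sub] at this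
            intro h; rw [← h] at this; nlinarith)
      (by apply Continuous.intervalIntegrable; apply Continuous.log; · continuity
          · intro θ; have := Jpos h0' h1' (π - θ); rw [Real.cos_pi_sub] at this
            intro h; rw [← h] at this; nlinarith)]
    have h2 : (∫ u in π..(2*π), Real.log (1 - 2*r^2*Real.cos u + (r^2)^2))
        = Jint (r^2) := by
      have := intervalIntegral.integral_comp_add_right
        (fun u => Real.log (1 - 2*r^2*Real.cos u + (r^2)^2)) π (a := 0) (b := π)
      simp only [zero_add] at this
      rw [show π + π = 2*π by ring] at this
      rw [← this, Jint]
      congr 1; funext θ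
      rw [Real.cos_add_pi]; ring_nf
    rw [h2, Jneg h0' h1']
  rw [eq_div_iff (two_ne_zero)]
  linarith [key, hsub, hsplit]

lemma Jbound {r : ℝ} (h0 : 0 ≤ r) (h1 : r < 1) :
    |Jint r| ≤ π * (-2 * Real.log (1 - r)) := by
  have h1r : (0:ℝ) < 1 - r := by linarith
  have hC : 0 ≤ -2 * Real.log (1 - r) := by
    have : Real.log (1 - r) ≤ 0 := Real.log_nonpos h1r.le (by linarith)
    linarith
  have := intervalIntegral.norm_integral_le_of_norm_le_const
    (C := -2 * Real.log (1 - r))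
    (f := fun θ => Real.log (1 + 2*r*Real.cos θ + r^2)) (a := 0) (b := π) ?_
  · rw [Real.norm_eq_abs] at this
    calc |Jint r| ≤ (-2 * Real.log (1 - r)) * |π - 0| := this
      _ = π * (-2 * Real.log (1 - r)) := by
          rw [sub_zero, abs_of_nonneg Real.pi_pos.le]; ring
  · intro θ _
    rw [Real.norm_eq_abs, abs_le]
    have hv := Jpos h0 h1 θ
    have hlow : (1 - r)^2 ≤ 1 + 2*r*Real.cos θ + r^2 := by
      nlinarith [Real.neg_one_le_cos θ]
    have hhigh : 1 + 2*r*Real.cos θ + r^2 ≤ (1 + r)^2 := by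
      nlinarith [Real.cos_le_one θ]
    have hlog1 : Real.log ((1-r)^2) ≤ Real.log (1 + 2*r*Real.cos θ + r^2) :=
      Real.log_le_log (by positivity) hlow
    have hlog2 : Real.log (1 + 2*r*Real.cos θ + r^2) ≤ Real.log ((1+r)^2) :=
      Real.log_le_log hv hhigh
    rw [Real.log_pow] at hlog1 hlog2
    have hmul : Real.log (1+r) + Real.log (1-r) ≤ 0 := by
      rw [← Real.log_mul (by linarith) h1r.ne']
      exact Real.log_nonpos (by nlinarith) (by nlinarith)
    constructor
    · push_cast at hlog1 ⊢; linarith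
    · push_cast at hlog2 ⊢; linarith

lemma Jzero {r : ℝ} (h0 : 0 ≤ r) (h1 : r < 1) : Jint r = 0 := by
  have hpow : ∀ n : ℕ, r ^ (2^n) ≤ r := by
    intro n
    exact pow_le_of_le_one h0 h1.le (Nat.two_pow_pos n).ne'
  have hpow1 : ∀ n : ℕ, r ^ (2^n) < 1 := fun n => lt_of_le_of_lt (hpow n) h1
  have hpow0 : ∀ n : ℕ, 0 ≤ r ^ (2^n) := fun n => pow_nonneg h0 _
  have key : ∀ n : ℕ, Jint r = Jint (r ^ (2^n)) / 2^n := by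
    intro n
    induction n with
    | zero => simp
    | succ n ih =>
      rw [ih, Jsq (hpow0 n) (hpow1 n), ← pow_mul]
      rw [show 2^n * 2 = 2^(n+1) by ring, div_div]
      congr 1
      ring
  set C := π * (-2 * Real.log (1 - r)) with hCdef
  have hCnn : 0 ≤ C := by
    have : Real.log (1 - r) ≤ 0 := Real.log_nonpos (by linarith) (by linarith)
    have := Real.pi_pos
    nlinarith
  have hbnd : ∀ n : ℕ, |Jint r| ≤ C / 2^n := by
    intro n
    rw [key n, abs_div, abs_of_nonneg (by positivity : (0:ℝ) ≤ (2:ℝ)^n)]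
    apply div_le_div_of_nonneg_right ?_ (by positivity)
    calc |Jint (r ^ 2^n)| ≤ π * (-2 * Real.log (1 - r ^ 2^n)) :=
          Jbound (hpow0 n) (hpow1 n)
      _ ≤ C := by
          rw [hCdef]
          have : Real.log (1 - r) ≤ Real.log (1 - r ^ 2^n) :=
            Real.log_le_log (by linarith) (by linarith [hpow n])
          nlinarith [Real.pi_pos]
  by_contra h
  have habs : 0 < |Jint r| := abs_pos.mpr h
  obtain ⟨n, hn⟩ := pow_unbounded_of_one_lt (C / |Jint r|) (by norm_num : (1:ℝ) < 2)
  have := hbnd n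
  rw [div_lt_iff₀ habs] at hn
  rw [le_div_iff₀ (by positivity : (0:ℝ) < 2^n)] at this
  nlinarith

lemma Kval (p q s : ℝ) (hq : 0 < q) (hs : 0 < s) (hq2 : q^2 = p^2 - s^2) (hqp : q < p) :
    (∫ θ in (0:ℝ)..π, Real.log (p + q * Real.cos θ)) = π * Real.log ((p+s)/2) := by
  have hp : 0 < p := hq.trans hqp
  have hps : 0 < p + s := by linarith
  set r := q / (p + s) with hrdef
  have hr0 : 0 < r := div_pos hq hps
  have hr1 : r < 1 := (div_lt_one hps).mpr (by linarith)
  have hfac : ∀ θ : ℝ, p + q * Real.cos θ = ((p+s)/2) * (1 + 2*r*Real.cos θ + r^2) := by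
    intro θ
    have e1 : ((p+s)/2) * (2*r*Real.cos θ) = q * Real.cos θ := by
      rw [hrdef]; field_simp
    have e2 : ((p+s)/2) * r^2 = (p-s)/2 := by
      rw [hrdef, div_pow, hq2, mul_div_assoc', div_eq_iff (pow_pos hps 2).ne']; ring
    linear_combination -e1 - e2
  calc (∫ θ in (0:ℝ)..π, Real.log (p + q * Real.cos θ))
      = ∫ θ in (0:ℝ)..π, (Real.log ((p+s)/2) + Real.log (1 + 2*r*Real.cos θ + r^2)) := by
        apply intervalIntegral.integral_congr
        intro θ _
        show Real.log (p + q * Real.cos θ) = _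
        rw [hfac θ, Real.log_mul (by positivity) (Jpos hr0.le hr1 θ).ne']
    _ = π * Real.log ((p+s)/2) + Jint r := by
        rw [intervalIntegral.integral_add (intervalIntegrable_const)
          ((Jcont hr0.le hr1).intervalIntegrable 0 π), intervalIntegral.integral_const,
          Jint]
        simp
    _ = π * Real.log ((p+s)/2) := by rw [Jzero hr0.le hr1, add_zero]

theorem integral_log_div_sqrt (a b : ℝ) (ha : 0 < a) (hab : a < b) :
    ∫ x in a..b, Real.log x / Real.sqrt ((b - x) * (x - a))
      = 2 * Real.pi * Real.log ((Real.sqrt a + Real.sqrt b) / 2) := by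
  have hb : 0 < b := ha.trans hab
  have hq : 0 < (b - a) / 2 := by linarith
  have hs : 0 < Real.sqrt (a * b) := Real.sqrt_pos.mpr (by positivity)
  have hs2 : (Real.sqrt (a * b)) ^ 2 = a * b := Real.sq_sqrt (by positivity)
  set f : ℝ → ℝ := fun θ => (a + b) / 2 + (b - a) / 2 * Real.cos θ with hfdef
  have hicc : Set.Ioo (0:ℝ) π ⊆ Set.Icc 0 π := Set.Ioo_subset_Icc_self
  have himg : f '' (Set.Ioo 0 π) = Set.Ioo a b := by
    ext x
    constructor
    · rintro ⟨θ, hθ, rfl⟩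
      have hc1 : Real.cos θ < Real.cos 0 :=
        Real.strictAntiOn_cos (Set.left_mem_Icc.mpr Real.pi_pos.le) (hicc hθ) hθ.1
      have hc2 : Real.cos π < Real.cos θ :=
        Real.strictAntiOn_cos (hicc hθ) (Set.right_mem_Icc.mpr Real.pi_pos.le) hθ.2
      rw [Real.cos_zero] at hc1
      rw [Real.cos_pi] at hc2
      constructor <;> simp only [hfdef] <;> nlinarith
    · intro hx
      refine ⟨Real.arccos ((x - (a + b) / 2) / ((b - a) / 2)), ⟨?_, ?_⟩, ?_⟩
      · rw [Real.arccos_pos]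
        rw [div_lt_one hq]
        linarith [hx.2]
      · have ht : -1 < (x - (a + b) / 2) / ((b - a) / 2) := by
          rw [lt_div_iff₀ hq]; linarith [hx.1]
        refine lt_of_le_of_ne (Real.arccos_le_pi _) ?_
        intro h
        rw [Real.arccos_eq_pi] at h
        linarith
      · simp only [hfdef]
        rw [Real.cos_arccos (by rw [le_div_iff₀ hq]; linarith [hx.1])
          (by rw [div_le_one hq]; linarith [hx.2])]
        field_simp [(sub_ne_zero.mpr hab.ne' : b - a ≠ 0)]
        ring
  have hderiv : ∀ θ ∈ Set.Ioo (0:ℝ) π,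
      HasDerivWithinAt f (-((b - a) / 2 * Real.sin θ)) (Set.Ioo 0 π) θ := by
    intro θ _
    have h := ((Real.hasDerivAt_cos θ).const_mul ((b - a) / 2)).const_add ((a + b) / 2)
    have h2 : (b - a) / 2 * (-Real.sin θ) = -((b - a) / 2 * Real.sin θ) := by ring
    rw [h2] at h
    exact h.hasDerivWithinAt
  have hinj : Set.InjOn f (Set.Ioo 0 π) := by
    have hanti : StrictAntiOn f (Set.Ioo 0 π) := by
      intro x hx y hy hxy
      have := Real.strictAntiOn_cos (hicc hx) (hicc hy) hxy
      simp only [hfdef]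
      nlinarith
    exact hanti.injOn
  have hsub := MeasureTheory.integral_image_eq_integral_abs_deriv_smul
    measurableSet_Ioo hderiv hinj
    (fun x => Real.log x / Real.sqrt ((b - x) * (x - a)))
  rw [himg] at hsub
  have heq : (∫ θ in Set.Ioo (0:ℝ) π,
        |(-((b - a) / 2 * Real.sin θ))| • (Real.log (f θ) / Real.sqrt ((b - f θ) * (f θ - a))))
      = ∫ θ in Set.Ioo (0:ℝ) π, Real.log (f θ) := by
    apply MeasureTheory.setIntegral_congr_fun measurableSet_Ioo
    intro θ hθ
    have hsin : 0 < Real.sin θ := Real.sin_pos_of_pos_of_lt_pi hθ.1 hθ.2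
    show |(-((b - a) / 2 * Real.sin θ))| • (Real.log (f θ) / Real.sqrt ((b - f θ) * (f θ - a)))
      = Real.log (f θ)
    have h3 : (b - f θ) * (f θ - a) = ((b - a) / 2 * Real.sin θ) ^ 2 := by
      simp only [hfdef]
      linear_combination (-(((b - a) / 2) ^ 2)) * Real.sin_sq_add_cos_sq θ
    rw [h3, Real.sqrt_sq (by positivity), abs_neg, abs_of_pos (by positivity), smul_eq_mul]
    rw [mul_div_cancel₀ _ (by positivity : ((b - a) / 2 * Real.sin θ) ≠ 0)]
  have hIoo2 : (∫ θ in Set.Ioo (0:ℝ) π, Real.log (f θ))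
      = ∫ θ in (0:ℝ)..π, Real.log ((a + b) / 2 + (b - a) / 2 * Real.cos θ) := by
    rw [intervalIntegral.integral_of_le Real.pi_pos.le,
      MeasureTheory.integral_Ioc_eq_integral_Ioo]
  have hK := Kval ((a + b) / 2) ((b - a) / 2) (Real.sqrt (a * b)) hq hs
    (by rw [hs2]; ring) (by linarith)
  have hfinal : π * Real.log (((a + b) / 2 + Real.sqrt (a * b)) / 2)
      = 2 * π * Real.log ((Real.sqrt a + Real.sqrt b) / 2) := by
    have h4 : ((Real.sqrt a + Real.sqrt b) / 2) ^ 2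
        = ((a + b) / 2 + Real.sqrt (a * b)) / 2 := by
      rw [Real.sqrt_mul ha.le]
      linear_combination (Real.sq_sqrt ha.le) / 4 + (Real.sq_sqrt hb.le) / 4
    rw [← h4, Real.log_pow]
    push_cast
    ring
  calc ∫ x in a..b, Real.log x / Real.sqrt ((b - x) * (x - a))
      = ∫ x in Set.Ioo a b, Real.log x / Real.sqrt ((b - x) * (x - a)) := by
        rw [intervalIntegral.integral_of_le hab.le,
          MeasureTheory.integral_Ioc_eq_integral_Ioo]
    _ = 2 * π * Real.log ((Real.sqrt a + Real.sqrt b) / 2) := by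
        rw [hsub, heq, hIoo2, hK, hfinal]
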